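/- Let d ≥ 1 be an integer and p ∈ (0,1), and let D(dp) be the convex set of pmfs on {0,…,d} with mean dp. If pd is not an integer, the number of extreme points of D(dp) equals (⌊pd⌋ + 1)·(d − ⌊pd⌋). If pd is an integer, the number of extreme points of D(dp) equals d²·p·(1−p) + 1. -/

import Mathlib

open Finset
def Dset (n : ℕ) (m : ℝ) : Set (Fin n → ℝ) :=
  {q | (∀ t, 0 ≤ q t) ∧ (∑ t, q t = 1) ∧ (∑ t, (t.val : ℝ) * q t = m)}

lemma sum_two {n : ℕ} (i j : Fin n) (hij : i ≠ j) (f : Fin n → ℝ)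
    (h : ∀ t, t ≠ i → t ≠ j → f t = 0) : ∑ t, f t = f i + f j := by
  rw [← Finset.sum_pair hij]
  symm
  apply Finset.sum_subset (Finset.subset_univ _)
  intro t _ ht
  simp only [Finset.mem_insert, Finset.mem_singleton] at ht
  push_neg at ht
  exact h t ht.1 ht.2

lemma sum_three {n : ℕ} (i j k : Fin n) (hij : i ≠ j) (hik : i ≠ k) (hjk : j ≠ k)
    (f : Fin n → ℝ) (h : ∀ t, t ≠ i → t ≠ j → t ≠ k → f t = 0) :
    ∑ t, f t = f i + f j + f k := by
  have : ∑ t, f t = ∑ t ∈ ({i, j, k} : Finset (Fin n)), f t := by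
    symm
    apply Finset.sum_subset (Finset.subset_univ _)
    intro t _ ht
    simp only [Finset.mem_insert, Finset.mem_singleton] at ht
    push_neg at ht
    exact h t ht.1 ht.2.1 ht.2.2
  rw [this, Finset.sum_insert (by simp [hij, hik]), Finset.sum_pair hjk, add_assoc]

noncomputable def extPt (n : ℕ) (m : ℝ) (i j : Fin n) : Fin n → ℝ := fun t =>
  if t = i then ((j.val : ℝ) - m) / ((j.val : ℝ) - (i.val : ℝ))
  else if t = j then (m - (i.val : ℝ)) / ((j.val : ℝ) - (i.val : ℝ)) else 0

noncomputable def deltaPt (n : ℕ) (i : Fin n) : Fin n → ℝ := fun t => if t = i then 1 else 0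

section
variable {n : ℕ} {m : ℝ}

lemma val_ne {i j : Fin n} (h : i ≠ j) : (i.val : ℝ) ≠ (j.val : ℝ) := by
  simpa [Fin.val_eq_val] using h

lemma ne_of_between {i j : Fin n} (hi : (i.val : ℝ) < m) (hj : m < (j.val : ℝ)) : i ≠ j := by
  intro h; subst h; linarith

lemma extPt_apply_fst {i j : Fin n} (hij : i ≠ j) :
    extPt n m i j i = ((j.val : ℝ) - m) / ((j.val : ℝ) - (i.val : ℝ)) := by
  simp [extPt]

lemma extPt_apply_snd {i j : Fin n} (hij : i ≠ j) :
    extPt n m i j j = (m - (i.val : ℝ)) / ((j.val : ℝ) - (i.val : ℝ)) := by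
  simp [extPt, hij.symm]

lemma extPt_apply_other {i j t : Fin n} (hti : t ≠ i) (htj : t ≠ j) :
    extPt n m i j t = 0 := by
  simp [extPt, hti, htj]

lemma extPt_pos_fst {i j : Fin n} (hi : (i.val : ℝ) < m) (hj : m < (j.val : ℝ)) :
    0 < extPt n m i j i := by
  rw [extPt_apply_fst (ne_of_between hi hj)]
  apply div_pos <;> linarith

lemma extPt_pos_snd {i j : Fin n} (hi : (i.val : ℝ) < m) (hj : m < (j.val : ℝ)) :
    0 < extPt n m i j j := by
  rw [extPt_apply_snd (ne_of_between hi hj)]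
  apply div_pos <;> linarith

lemma extPt_mem {i j : Fin n} (hi : (i.val : ℝ) < m) (hj : m < (j.val : ℝ)) :
    extPt n m i j ∈ Dset n m := by
  have hij : i ≠ j := ne_of_between hi hj
  have hd : (0:ℝ) < (j.val : ℝ) - (i.val : ℝ) := by linarith
  refine ⟨?_, ?_, ?_⟩
  · intro t
    by_cases hti : t = i
    · subst hti; exact le_of_lt (extPt_pos_fst hi hj)
    by_cases htj : t = j
    · subst htj; exact le_of_lt (extPt_pos_snd hi hj)
    · rw [extPt_apply_other hti htj]
  · rw [sum_two i j hij _ (fun t hti htj => extPt_apply_other hti htj),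
      extPt_apply_fst hij, extPt_apply_snd hij]
    field_simp
    ring
  · rw [sum_two i j hij _ (fun t hti htj => by rw [extPt_apply_other hti htj, mul_zero]),
      extPt_apply_fst hij, extPt_apply_snd hij]
    field_simp
    ring

lemma solve_two {i j : Fin n} (hij : i ≠ j) (q : Fin n → ℝ) (hq : q ∈ Dset n m)
    (h0 : ∀ t, t ≠ i → t ≠ j → q t = 0) : q = extPt n m i j := by
  obtain ⟨-, hs, hm⟩ := hq
  have hvne : (i.val : ℝ) ≠ (j.val : ℝ) := val_ne hij
  have hdne : (j.val : ℝ) - (i.val : ℝ) ≠ 0 := sub_ne_zero.mpr hvne.symm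
  have h1 : q i + q j = 1 := by rw [← sum_two i j hij q h0]; exact hs
  have h2 : (i.val : ℝ) * q i + (j.val : ℝ) * q j = m := by
    rw [← sum_two i j hij (fun t => (t.val : ℝ) * q t)
      (fun t hti htj => show (t.val:ℝ) * q t = 0 by rw [h0 t hti htj, mul_zero])]
    exact hm
  have hqj : q j = (m - (i.val : ℝ)) / ((j.val : ℝ) - (i.val : ℝ)) := by
    field_simp
    linear_combination h2 - (i.val : ℝ) * h1
  have hqi : q i = ((j.val : ℝ) - m) / ((j.val : ℝ) - (i.val : ℝ)) := by
    field_simp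
    linear_combination (j.val : ℝ) * h1 - h2
  funext t
  by_cases hti : t = i
  · subst hti; rw [extPt_apply_fst hij]; exact hqi
  by_cases htj : t = j
  · subst htj; rw [extPt_apply_snd hij]; exact hqj
  · rw [extPt_apply_other hti htj]; exact h0 t hti htj

lemma solve_one {i : Fin n} (q : Fin n → ℝ) (hq : q ∈ Dset n m)
    (h0 : ∀ t, t ≠ i → q t = 0) : q = deltaPt n i ∧ (i.val : ℝ) = m := by
  obtain ⟨-, hs, hm⟩ := hq
  have h1 : q i = 1 := by
    rw [← Finset.sum_eq_single i (fun t _ ht => h0 t ht) (fun h => absurd (Finset.mem_univ i) h)]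
    exact hs
  constructor
  · funext t
    by_cases hti : t = i
    · subst hti; rw [h1]; simp [deltaPt]
    · simp [deltaPt, hti, h0 t hti]
  · rw [← hm, Finset.sum_eq_single i (fun t _ ht => show (t.val:ℝ) * q t = 0 by rw [h0 t ht, mul_zero]) (fun h => absurd (Finset.mem_univ i) h),
      h1, mul_one]

end

section
variable {n : ℕ} {m : ℝ}

lemma zero_of_seg {a b c : ℝ} {θ : ℝ} (hθ : θ ∈ Set.Ioo (0:ℝ) 1) (ha : 0 ≤ a) (hb : 0 ≤ b)
    (hc : (1 - θ) • a + θ • b = c) (hc0 : c = 0) : a = 0 ∧ b = 0 := by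
  obtain ⟨h0, h1⟩ := hθ
  simp only [smul_eq_mul] at hc
  constructor <;> nlinarith

lemma extPt_extreme {i j : Fin n} (hi : (i.val : ℝ) < m) (hj : m < (j.val : ℝ)) :
    extPt n m i j ∈ Set.extremePoints ℝ (Dset n m) := by
  have hij : i ≠ j := ne_of_between hi hj
  refine mem_extremePoints.mpr ⟨extPt_mem hi hj, ?_⟩
  intro a ha b hb hseg
  rw [openSegment_eq_image] at hseg
  obtain ⟨θ, hθ, hq⟩ := hseg
  have hz : ∀ t, t ≠ i → t ≠ j → a t = 0 ∧ b t = 0 := by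
    intro t hti htj
    exact zero_of_seg hθ (ha.1 t) (hb.1 t) (congrFun hq t) (extPt_apply_other hti htj)
  constructor
  · exact solve_two hij a ha (fun t hti htj => (hz t hti htj).1)
  · exact solve_two hij b hb (fun t hti htj => (hz t hti htj).2)

lemma deltaPt_extreme {i : Fin n} (hm : (i.val : ℝ) = m) :
    deltaPt n i ∈ Set.extremePoints ℝ (Dset n m) := by
  have hmem : deltaPt n i ∈ Dset n m := by
    refine ⟨fun t => by by_cases h : t = i <;> simp [deltaPt, h], ?_, ?_⟩
    · rw [Finset.sum_eq_single i (fun t _ ht => by simp [deltaPt, ht])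
        (fun h => absurd (Finset.mem_univ i) h)]
      simp [deltaPt]
    · rw [Finset.sum_eq_single i
        (fun t _ ht => show (t.val:ℝ) * deltaPt n i t = 0 by simp [deltaPt, ht])
        (fun h => absurd (Finset.mem_univ i) h)]
      simp [deltaPt, hm]
  refine mem_extremePoints.mpr ⟨hmem, ?_⟩
  intro a ha b hb hseg
  rw [openSegment_eq_image] at hseg
  obtain ⟨θ, hθ, hq⟩ := hseg
  have hz : ∀ t, t ≠ i → a t = 0 ∧ b t = 0 := by
    intro t hti
    exact zero_of_seg hθ (ha.1 t) (hb.1 t) (congrFun hq t) (by simp [deltaPt, hti])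
  constructor
  · exact (solve_one a ha (fun t ht => (hz t ht).1)).1
  · exact (solve_one b hb (fun t ht => (hz t ht).2)).1

end

section
variable {n : ℕ} {m : ℝ}

lemma not_extreme_of_three (q : Fin n → ℝ) (hq : q ∈ Dset n m) (i j k : Fin n)
    (hij : i ≠ j) (hik : i ≠ k) (hjk : j ≠ k)
    (hqi : 0 < q i) (hqj : 0 < q j) (hqk : 0 < q k) :
    q ∉ Set.extremePoints ℝ (Dset n m) := by
  intro hext
  set A : ℝ := (j.val : ℝ) - (k.val : ℝ) with hA
  set B : ℝ := (k.val : ℝ) - (i.val : ℝ) with hB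
  set C : ℝ := (i.val : ℝ) - (j.val : ℝ) with hC
  have hAne : A ≠ 0 := sub_ne_zero.mpr (val_ne hjk)
  set v : Fin n → ℝ := fun t => if t = i then A else if t = j then B else if t = k then C else 0
    with hv
  have hvi : v i = A := by simp [hv]
  have hvj : v j = B := by simp [hv, hij.symm]
  have hvk : v k = C := by simp [hv, hik.symm, hjk.symm]
  have hv0 : ∀ t, t ≠ i → t ≠ j → t ≠ k → v t = 0 := by
    intro t h1 h2 h3; simp [hv, h1, h2, h3]
  have hsum : ∑ t, v t = 0 := by
    rw [sum_three i j k hij hik hjk v hv0, hvi, hvj, hvk]; ring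
  have hwsum : ∑ t, (t.val : ℝ) * v t = 0 := by
    rw [sum_three i j k hij hik hjk _
      (fun t h1 h2 h3 => show (t.val:ℝ) * v t = 0 by rw [hv0 t h1 h2 h3, mul_zero]),
      hvi, hvj, hvk]
    ring
  set ε : ℝ := min (min (q i / (|A| + 1)) (q j / (|B| + 1))) (q k / (|C| + 1)) with hε
  have hεpos : 0 < ε := by
    refine lt_min (lt_min ?_ ?_) ?_ <;> positivity
  have hbound : ∀ t, q t + ε * v t ≥ 0 ∧ q t - ε * v t ≥ 0 := by
    intro t
    have key : ε * |v t| ≤ q t := by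
      by_cases h1 : t = i
      · rw [h1, hvi]
        have h2 : ε ≤ q i / (|A| + 1) := le_trans (min_le_left _ _) (min_le_left _ _)
        have h3 : (0:ℝ) < |A| + 1 := by positivity
        rw [le_div_iff₀ h3] at h2
        nlinarith [abs_nonneg A]
      by_cases h2 : t = j
      · rw [h2, hvj]
        have h2 : ε ≤ q j / (|B| + 1) := le_trans (min_le_left _ _) (min_le_right _ _)
        have h3 : (0:ℝ) < |B| + 1 := by positivity
        rw [le_div_iff₀ h3] at h2
        nlinarith [abs_nonneg B]
      by_cases h3 : t = k
      · rw [h3, hvk]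
        have h2 : ε ≤ q k / (|C| + 1) := min_le_right _ _
        have h3 : (0:ℝ) < |C| + 1 := by positivity
        rw [le_div_iff₀ h3] at h2
        nlinarith [abs_nonneg C]
      · rw [hv0 t h1 h2 h3]
        simpa using (hq.1 t)
    have habs := abs_nonneg (v t)
    have h1 := neg_abs_le (v t)
    have h2 := le_abs_self (v t)
    constructor <;> nlinarith
  set a : Fin n → ℝ := fun t => q t + ε * v t with ha
  set b : Fin n → ℝ := fun t => q t - ε * v t with hb
  have haD : a ∈ Dset n m := by
    refine ⟨fun t => (hbound t).1, ?_, ?_⟩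
    · have : ∑ t, a t = ∑ t, q t + ε * ∑ t, v t := by
        rw [Finset.mul_sum, ← Finset.sum_add_distrib]
      rw [this, hq.2.1, hsum]; ring
    · have : ∑ t, (t.val:ℝ) * a t = ∑ t, (t.val:ℝ) * q t + ε * ∑ t, (t.val:ℝ) * v t := by
        rw [Finset.mul_sum, ← Finset.sum_add_distrib]
        apply Finset.sum_congr rfl
        intro t _; ring
      rw [this, hq.2.2, hwsum]; ring
  have hbD : b ∈ Dset n m := by
    refine ⟨fun t => (hbound t).2, ?_, ?_⟩
    · have : ∑ t, b t = ∑ t, q t - ε * ∑ t, v t := by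
        rw [Finset.mul_sum, ← Finset.sum_sub_distrib]
      rw [this, hq.2.1, hsum]; ring
    · have : ∑ t, (t.val:ℝ) * b t = ∑ t, (t.val:ℝ) * q t - ε * ∑ t, (t.val:ℝ) * v t := by
        rw [Finset.mul_sum, ← Finset.sum_sub_distrib]
        apply Finset.sum_congr rfl
        intro t _; ring
      rw [this, hq.2.2, hwsum]; ring
  have hmem : q ∈ openSegment ℝ a b := by
    rw [openSegment_eq_image]
    refine ⟨1/2, by norm_num, ?_⟩
    funext t
    simp only [Pi.add_apply, Pi.smul_apply, smul_eq_mul, ha, hb]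
    ring
  have heq := ((mem_extremePoints.mp hext).2 a haD b hbD hmem).1
  have hai : q i + ε * v i = q i := by
    have := congrFun heq i
    simpa [ha] using this
  rw [hvi] at hai
  have : ε * A = 0 := by linarith [hai]
  rcases mul_eq_zero.mp this with h | h
  · exact absurd h (ne_of_gt hεpos)
  · exact hAne h
end

section
variable {n : ℕ} {m : ℝ}

lemma classification (q : Fin n → ℝ) (hq : q ∈ Set.extremePoints ℝ (Dset n m)) :
    (∃ i j : Fin n, (i.val : ℝ) < m ∧ m < (j.val : ℝ) ∧ q = extPt n m i j) ∨
    (∃ i : Fin n, (i.val : ℝ) = m ∧ q = deltaPt n i) := by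
  obtain ⟨hpos, hs, hm⟩ := hq.1
  have hex : ∃ i, 0 < q i := by
    by_contra h
    push_neg at h
    have h0 : ∀ i, q i = 0 := fun i => le_antisymm (h i) (hpos i)
    rw [Finset.sum_congr rfl (fun t _ => h0 t), Finset.sum_const_zero] at hs
    norm_num at hs
  obtain ⟨i, hi⟩ := hex
  by_cases h2 : ∃ j, j ≠ i ∧ 0 < q j
  · obtain ⟨j, hji, hj⟩ := h2
    have h0 : ∀ t, t ≠ i → t ≠ j → q t = 0 := by
      intro t hti htj
      by_contra ht
      have ht' : 0 < q t := lt_of_le_of_ne (hpos t) (Ne.symm ht)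
      exact not_extreme_of_three q hq.1 i j t hji.symm (Ne.symm hti) (Ne.symm htj)
        hi hj ht' hq
    have h1 : q i + q j = 1 := by rw [← sum_two i j hji.symm q h0]; exact hs
    have hw : (i.val : ℝ) * q i + (j.val : ℝ) * q j = m := by
      rw [← sum_two i j hji.symm (fun t => (t.val : ℝ) * q t)
        (fun t hti htj => show (t.val:ℝ) * q t = 0 by rw [h0 t hti htj, mul_zero])]
      exact hm
    left
    rcases Nat.lt_or_ge i.val j.val with hlt | hge
    · have hvlt : (i.val : ℝ) < (j.val : ℝ) := by exact_mod_cast hlt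
      refine ⟨i, j, by nlinarith, by nlinarith, solve_two hji.symm q hq.1 h0⟩
    · have hvlt : (j.val : ℝ) < (i.val : ℝ) := by
        have : j.val < i.val := lt_of_le_of_ne hge (fun h => hji (Fin.ext h))
        exact_mod_cast this
      refine ⟨j, i, by nlinarith, by nlinarith, solve_two hji q hq.1 (fun t a b => h0 t b a)⟩
  · push_neg at h2
    have h0 : ∀ t, t ≠ i → q t = 0 := fun t ht =>
      le_antisymm (h2 t ht) (hpos t)
    obtain ⟨hq1, hq2⟩ := solve_one q hq.1 h0
    exact Or.inr ⟨i, hq2, hq1⟩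

end

section
variable {n : ℕ} {m : ℝ}

lemma extPt_inj {i j i' j' : Fin n} (hi : (i.val : ℝ) < m) (hj : m < (j.val : ℝ))
    (hi' : (i'.val : ℝ) < m) (hj' : m < (j'.val : ℝ))
    (heq : extPt n m i j = extPt n m i' j') : i = i' ∧ j = j' := by
  have key : ∀ t : Fin n, 0 < extPt n m i j t → t = i ∨ t = j := by
    intro t ht
    by_contra h
    push_neg at h
    rw [extPt_apply_other h.1 h.2] at ht
    exact lt_irrefl 0 ht
  have h1 : 0 < extPt n m i j i' := by rw [heq]; exact extPt_pos_fst hi' hj'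
  have h2 : 0 < extPt n m i j j' := by rw [heq]; exact extPt_pos_snd hi' hj'
  have hii : i' = i := by
    rcases key i' h1 with h | h
    · exact h
    · exfalso; rw [h] at hi'; linarith
  have hjj : j' = j := by
    rcases key j' h2 with h | h
    · exfalso; rw [h] at hj'; linarith
    · exact h
  exact ⟨hii.symm, hjj.symm⟩

end

section
open Classical in
lemma card_filter_le (d c : ℕ) (hc : c ≤ d) :
    ((univ : Finset (Fin (d+1))).filter (fun i => i.val ≤ c)).card = c + 1 := by
  have h : ((univ : Finset (Fin (d+1))).filter (fun i => i.val ≤ c))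
      = Finset.Iic (⟨c, by omega⟩ : Fin (d+1)) := by
    ext i
    simp [Fin.le_def]
  rw [h, Fin.card_Iic]

open Classical in
lemma card_filter_lt (d c : ℕ) (hc : c ≤ d) :
    ((univ : Finset (Fin (d+1))).filter (fun i => i.val < c)).card = c := by
  have h : ((univ : Finset (Fin (d+1))).filter (fun i => i.val < c))
      = Finset.Iio (⟨c, by omega⟩ : Fin (d+1)) := by
    ext i
    simp [Fin.lt_def]
  rw [h, Fin.card_Iio]

open Classical in
lemma card_filter_gt (d c : ℕ) (hc : c ≤ d) :
    ((univ : Finset (Fin (d+1))).filter (fun i => c < i.val)).card = d - c := by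
  have key := Finset.card_filter_add_card_filter_not
    (s := (univ : Finset (Fin (d+1)))) (p := fun i => i.val ≤ c)
  rw [card_filter_le d c hc, Finset.card_univ, Fintype.card_fin] at key
  have h : ((univ : Finset (Fin (d+1))).filter (fun i => c < i.val))
      = ((univ : Finset (Fin (d+1))).filter (fun i => ¬ i.val ≤ c)) := by
    ext i; simp
  rw [h]
  omega

end

/-- If `pd` is not an integer, the number of extreme points of `D(dp)` is
`(⌊pd⌋ + 1)(d − ⌊pd⌋)`; if `pd` is an integer, it is `d² p (1−p) + 1`. -/
theorem stmt_4 (d : ℕ) (hd : 1 ≤ d) (p : ℝ) (hp : p ∈ Set.Ioo (0 : ℝ) 1)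
    (D : Set (Fin (d + 1) → ℝ))
    (hD : D = {q : Fin (d + 1) → ℝ |
      (∀ j, 0 ≤ q j) ∧ (∑ j, q j = 1) ∧ (∑ j, (j.val : ℝ) * q j = p * d)}) :
    ((¬ ∃ k : ℕ, (k : ℝ) = p * d) →
      (Set.extremePoints ℝ D).ncard = (Nat.floor (p * d) + 1) * (d - Nat.floor (p * d))) ∧
    ((∃ k : ℕ, (k : ℝ) = p * d) →
      ((Set.extremePoints ℝ D).ncard : ℝ) = (d : ℝ) ^ 2 * p * (1 - p) + 1) := by
  classical
  obtain ⟨hp0, hp1⟩ := hp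
  have hDD : D = Dset (d+1) (p * d) := hD
  clear hD
  subst hDD
  set m : ℝ := p * d with hmdef
  have hdpos : (0:ℝ) < d := by
    have : (1:ℝ) ≤ (d:ℝ) := by exact_mod_cast hd
    linarith
  have hm0 : 0 < m := mul_pos hp0 hdpos
  have hmd : m < d := by rw [hmdef]; nlinarith
  set g : Fin (d+1) × Fin (d+1) → (Fin (d+1) → ℝ) := fun ij => extPt (d+1) m ij.1 ij.2 with hg
  set F : Finset (Fin (d+1) × Fin (d+1)) :=
    univ.filter (fun ij => ((ij.1.val : ℝ) < m ∧ m < (ij.2.val : ℝ))) with hF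
  have hFmem : ∀ ij : Fin (d+1) × Fin (d+1),
      ij ∈ F ↔ ((ij.1.val : ℝ) < m ∧ m < (ij.2.val : ℝ)) := by
    intro ij; rw [hF, Finset.mem_filter]; simp
  have hinj : Set.InjOn g ↑F := by
    intro a ha b hb hab
    obtain ⟨ha1, ha2⟩ := (hFmem a).mp (Finset.mem_coe.mp ha)
    obtain ⟨hb1, hb2⟩ := (hFmem b).mp (Finset.mem_coe.mp hb)
    obtain ⟨e1, e2⟩ := extPt_inj ha1 ha2 hb1 hb2 hab
    exact Prod.ext e1 e2
  constructor
  · -- non-integer case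
    intro hni
    set k : ℕ := Nat.floor m with hk
    have hkd : k < d := (Nat.floor_lt hm0.le).mpr hmd
    have hilt : ∀ i : Fin (d+1), ((i.val : ℝ) < m ↔ i.val ≤ k) := by
      intro i
      constructor
      · intro h; exact Nat.le_floor (le_of_lt h)
      · intro h
        have h1 : (i.val : ℝ) ≤ (k : ℝ) := by exact_mod_cast h
        have h2 : (k : ℝ) ≤ m := Nat.floor_le hm0.le
        exact lt_of_le_of_ne (le_trans h1 h2) (fun he => hni ⟨i.val, he⟩)
    have hjgt : ∀ j : Fin (d+1), (m < (j.val : ℝ) ↔ k < j.val) := by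
      intro j; exact (Nat.floor_lt hm0.le).symm
    have hset : Set.extremePoints ℝ (Dset (d+1) m) = ↑(F.image g) := by
      ext q
      constructor
      · intro hq
        rcases classification q hq with ⟨i, j, hi, hj, rfl⟩ | ⟨i, hi, -⟩
        · exact Finset.mem_coe.mpr (Finset.mem_image.mpr
            ⟨(i, j), (hFmem (i, j)).mpr ⟨hi, hj⟩, rfl⟩)
        · exact absurd ⟨i.val, hi⟩ hni
      · intro hq
        obtain ⟨ij, hij, rfl⟩ := Finset.mem_image.mp (Finset.mem_coe.mp hq)
        obtain ⟨h1, h2⟩ := (hFmem ij).mp hij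
        exact extPt_extreme h1 h2
    rw [hset, Set.ncard_coe_finset, Finset.card_image_of_injOn hinj]
    have hFeq : F = (univ.filter fun i : Fin (d+1) => (i.val : ℝ) < m) ×ˢ
        (univ.filter fun j : Fin (d+1) => m < (j.val : ℝ)) := by
      ext ij
      simp only [hF, Finset.mem_filter, Finset.mem_univ, true_and, Finset.mem_product]
    rw [hFeq, Finset.card_product]
    have c1 : (univ.filter fun i : Fin (d+1) => (i.val : ℝ) < m).card = k + 1 := by
      rw [Finset.filter_congr (fun i _ => hilt i)]
      exact card_filter_le d k (le_of_lt hkd)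
    have c2 : (univ.filter fun j : Fin (d+1) => m < (j.val : ℝ)).card = d - k := by
      rw [Finset.filter_congr (fun j _ => hjgt j)]
      exact card_filter_gt d k (le_of_lt hkd)
    rw [c1, c2]
  · -- integer case
    rintro ⟨k0, hk0⟩
    have hk0d : k0 < d := by
      have : (k0 : ℝ) < (d : ℝ) := by rw [hk0]; exact hmd
      exact_mod_cast this
    set kF : Fin (d+1) := ⟨k0, by omega⟩ with hkF
    have hkFv : ((kF.val : ℕ) : ℝ) = m := by rw [hkF]; exact hk0
    have hset : Set.extremePoints ℝ (Dset (d+1) m)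
        = insert (deltaPt (d+1) kF) ↑(F.image g) := by
      ext q
      constructor
      · intro hq
        rcases classification q hq with ⟨i, j, hi, hj, rfl⟩ | ⟨i, hi, rfl⟩
        · exact Set.mem_insert_of_mem _ (Finset.mem_coe.mpr (Finset.mem_image.mpr
            ⟨(i, j), (hFmem (i, j)).mpr ⟨hi, hj⟩, rfl⟩))
        · have : i = kF := by
            apply Fin.ext
            have : (i.val : ℝ) = (k0 : ℝ) := by rw [hi, hk0]
            have := Nat.cast_injective (R := ℝ) this
            simpa [hkF] using this
          rw [this]
          exact Set.mem_insert _ _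
      · intro hq
        rcases Set.mem_insert_iff.mp hq with rfl | hq
        · exact deltaPt_extreme hkFv
        · obtain ⟨ij, hij, rfl⟩ := Finset.mem_image.mp (Finset.mem_coe.mp hq)
          obtain ⟨h1, h2⟩ := (hFmem ij).mp hij
          exact extPt_extreme h1 h2
    have hnm : deltaPt (d+1) kF ∉ (↑(F.image g) : Set (Fin (d+1) → ℝ)) := by
      intro hmem
      obtain ⟨ij, hij, heq⟩ := Finset.mem_image.mp (Finset.mem_coe.mp hmem)
      obtain ⟨h1, h2⟩ := (hFmem ij).mp hij
      have hne : ij.1 ≠ kF := by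
        intro h
        rw [h] at h1
        rw [hkFv] at h1
        exact lt_irrefl m h1
      have hz : deltaPt (d+1) kF ij.1 = 0 := by simp [deltaPt, hne]
      rw [← heq] at hz
      have hpos := extPt_pos_fst h1 h2
      rw [hg] at hz
      simp only at hz
      rw [hz] at hpos
      exact lt_irrefl 0 hpos
    rw [hset, Set.ncard_insert_of_notMem hnm (Set.toFinite _), Set.ncard_coe_finset,
      Finset.card_image_of_injOn hinj]
    have hFeq : F = (univ.filter fun i : Fin (d+1) => (i.val : ℝ) < m) ×ˢ
        (univ.filter fun j : Fin (d+1) => m < (j.val : ℝ)) := by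
      ext ij
      simp only [hF, Finset.mem_filter, Finset.mem_univ, true_and, Finset.mem_product]
    have hiff1 : ∀ i : Fin (d+1), ((i.val : ℝ) < m ↔ i.val < k0) := by
      intro i; rw [← hk0]; exact Nat.cast_lt
    have hiff2 : ∀ j : Fin (d+1), (m < (j.val : ℝ) ↔ k0 < j.val) := by
      intro j; rw [← hk0]; exact Nat.cast_lt
    have c1 : (univ.filter fun i : Fin (d+1) => (i.val : ℝ) < m).card = k0 := by
      rw [Finset.filter_congr (fun i _ => hiff1 i)]
      exact card_filter_lt d k0 (le_of_lt hk0d)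
    have c2 : (univ.filter fun j : Fin (d+1) => m < (j.val : ℝ)).card = d - k0 := by
      rw [Finset.filter_congr (fun j _ => hiff2 j)]
      exact card_filter_gt d k0 (le_of_lt hk0d)
    rw [hFeq, Finset.card_product, c1, c2]
    push_cast [Nat.cast_sub (le_of_lt hk0d)]
    rw [hk0, hmdef]
    ring
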